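/- arXiv:1810.11079 — 4 statements merged into one kernel-verified Lean document; each statement's English description precedes it below -/
import Mathlib

section
/- Fix an integer g ≥ 1 and integers k, j with 1 ≤ k ≤ j ≤ g. Then the following identity of polynomials in ℚ[e₁,…,e_{2g+1}] holds: (−1)^{k+j+1} · 4 · Σ_{I₀} Σ_{n=1}^{k} n · ( s_{g−k+n}(I₀) · S_{g−j−n+1}(J₀) + s_{g−j−n}(I₀) · S_{g+n−k+1}(J₀) ) = λ_{k+j} · ( C(2g+1, g) / C(2g+1, 2g+1−k−j) ) · Σ_{n=1}^{k} n · ( C(g, g−k+n)·C(g+1, g−j−n+1) + C(g, g−j−n)·C(g+1, g−k+n+1) ), where the outer sum on the left runs over all g-element subsets I₀ of {1,…,2g+1}, J₀ denotes the complement of I₀, and C(a,b) denotes the binomial coefficient (with C(a,b) = 0 when b < 0 or b > a). (Equivalently: the entries Λ_{k,j} = −4 Σ_{I₀} ℘-sum of the matrix Λ_g are given by the stated binomial-coefficient multiple of λ_{k+j}.) -/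
/- STATEMENT 0: the entries Λ_{k,j} = −4 Σ_{I₀} Σ_{n=1}^{k} n (s_{g−k+n}(I₀) S_{g−j−n+1}(J₀)
   + s_{g−j−n}(I₀) S_{g+n−k+1}(J₀)) of the matrix Λ_g are the stated binomial-coefficient
   multiples of λ_{k+j}, as an identity in ℚ[e₁,…,e_{2g+1}]. -/

open MvPolynomial Finset

noncomputable section

/-- `m`-th elementary symmetric polynomial of the variables `{eᵢ : i ∈ I}`, with the
convention that it vanishes for negative index `m`. -/
def esymmOn (g : ℕ) (I : Finset (Fin (2 * g + 1))) (m : ℤ) :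
    MvPolynomial (Fin (2 * g + 1)) ℚ :=
  if m < 0 then 0 else (I.val.map X).esymm m.toNat

/-- The coefficients λ_m defined by `4∏_{j}(x−e_j) = 4x^{2g+1} + Σ_{i=0}^{2g} λᵢ xⁱ`
(together with λ_{2g+1} = 4), i.e. `λ_m = 4(−1)^{2g+1−m} σ_{2g+1−m}(e₁,…,e_{2g+1})`. -/
def lamPoly (g : ℕ) (m : ℕ) : MvPolynomial (Fin (2 * g + 1)) ℚ :=
  4 * (-1) ^ (2 * g + 1 - m) *
    ((Finset.univ : Finset (Fin (2 * g + 1))).val.map X).esymm (2 * g + 1 - m)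

/-- Binomial coefficient `C(a,b)` with an integer lower index, vanishing for `b < 0`
(and, as usual, for `b > a`). -/
def Cz (a : ℕ) (b : ℤ) : ℕ := if b < 0 then 0 else a.choose b.toNat

/-! ### Auxiliary lemmas -/

/-- Symmetric trinomial identity, unconditional in ℕ. -/
lemma choose_trinom (N p q : ℕ) :
    N.choose p * (N - p).choose q = N.choose q * (N - q).choose p := by
  by_cases hpq : p + q ≤ N
  · have h1 := Nat.choose_mul (n := N) (k := p + q) (s := p) (Nat.le_add_right _ _)
    have h2 := Nat.choose_mul (n := N) (k := p + q) (s := q) (Nat.le_add_left _ _)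
    have e1 : p + q - p = q := by omega
    have e2 : p + q - q = p := by omega
    rw [e1] at h1; rw [e2] at h2
    have e3 : (p + q).choose p = (p + q).choose q :=
      Nat.choose_symm_add
    rw [← h1, ← h2, e3]
  · push_neg at hpq
    by_cases hp : p ≤ N
    · by_cases hq : q ≤ N
      · rw [Nat.choose_eq_zero_of_lt (by omega : N - p < q),
          Nat.choose_eq_zero_of_lt (by omega : N - q < p)]
        ring
      · rw [Nat.choose_eq_zero_of_lt (by omega : N < q),
          Nat.choose_eq_zero_of_lt (by omega : N - p < q)]
        ring
    · rw [Nat.choose_eq_zero_of_lt (by omega : N < p),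
        Nat.choose_eq_zero_of_lt (by omega : N - q < p)]
      ring

/-- Main binomial identity. Here `d = 2g+1-(k+j)`, the first index is `a`, `b = d - a`. -/
lemma main_nat (g k j a : ℕ) (hkj : k + j ≤ 2 * g) (ha : a ≤ g)
    (had : a ≤ 2 * g + 1 - (k + j)) (hb : 2 * g + 1 - (k + j) ≤ a + g + 1) :
    (2 * g + 1).choose (2 * g + 1 - (k + j)) *
        ((2 * g + 1 - (k + j)).choose a * (k + j).choose (g - a)) =
      (2 * g + 1).choose g *
        (g.choose a * (g + 1).choose (2 * g + 1 - (k + j) - a)) := by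
  set N := 2 * g + 1 with hN
  set d := 2 * g + 1 - (k + j) with hd
  set b := d - a with hbdef
  have h1 : N.choose d * d.choose a = N.choose a * (N - a).choose (d - a) :=
    Nat.choose_mul had
  have h2 : N.choose g * g.choose a = N.choose a * (N - a).choose (g - a) :=
    Nat.choose_mul ha
  have h3 : (N - a).choose b * (N - a - b).choose (g - a) =
      (N - a).choose (g - a) * (N - a - (g - a)).choose b := choose_trinom _ _ _
  have e1 : N - a - b = k + j := by omega
  have e2 : N - a - (g - a) = g + 1 := by omega
  rw [e1, e2] at h3
  calc N.choose d * (d.choose a * (k + j).choose (g - a))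
      = (N.choose d * d.choose a) * (k + j).choose (g - a) := by ring
    _ = N.choose a * ((N - a).choose b * (k + j).choose (g - a)) := by rw [h1]; ring
    _ = N.choose a * ((N - a).choose (g - a) * (g + 1).choose b) := by rw [h3]
    _ = (N.choose g * g.choose a) * (g + 1).choose b := by rw [h2]; ring
    _ = N.choose g * (g.choose a * (g + 1).choose (d - a)) := by rw [← hbdef]; ring

section Counting

variable {σ : Type*} [Fintype σ] [DecidableEq σ]

/-- Number of `g`-subsets containing `A` and disjoint from `B`. -/
lemma card_mid (g : ℕ) (A B : Finset σ) (hAB : Disjoint A B) (ha : A.card ≤ g) :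
    ((univ.powersetCard g).filter (fun I => A ⊆ I ∧ Disjoint B I)).card
      = (Fintype.card σ - (A.card + B.card)).choose (g - A.card) := by
  have hcompl : ((A ∪ B)ᶜ : Finset σ).card = Fintype.card σ - (A.card + B.card) := by
    rw [Finset.card_compl, Finset.card_union_of_disjoint hAB]
  rw [← hcompl, ← Finset.card_powersetCard]
  apply Finset.card_bij' (fun I _ => I \ A) (fun J _ => J ∪ A)
  · rintro I hI
    simp only [mem_filter, mem_powersetCard] at hI
    obtain ⟨⟨-, hIcard⟩, hAI, hBI⟩ := hI
    rw [Finset.mem_powersetCard]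
    constructor
    · intro x hx
      simp only [Finset.mem_sdiff] at hx
      simp only [Finset.mem_compl, Finset.mem_union]
      exact fun h => h.elim hx.2 (fun hB => Finset.disjoint_left.mp hBI hB hx.1)
    · rw [Finset.card_sdiff_of_subset hAI, hIcard]
  · rintro J hJ
    rw [Finset.mem_powersetCard] at hJ
    obtain ⟨hJsub, hJcard⟩ := hJ
    have hJA : Disjoint J A := by
      refine Finset.disjoint_left.mpr fun x hx hxA => ?_
      have := hJsub hx
      simp only [Finset.mem_compl, Finset.mem_union] at this
      exact this (Or.inl hxA)
    simp only [mem_filter, mem_powersetCard]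
    refine ⟨⟨Finset.subset_univ _, ?_⟩, Finset.subset_union_right, ?_⟩
    · rw [Finset.card_union_of_disjoint hJA, hJcard]; omega
    · refine Finset.disjoint_right.mpr fun x hx => ?_
      rcases Finset.mem_union.mp hx with h | h
      · have := hJsub h
        simp only [Finset.mem_compl, Finset.mem_union] at this
        exact fun hB => this (Or.inr hB)
      · exact fun hB => Finset.disjoint_left.mp hAB h hB
  · rintro I hI
    simp only [mem_filter, mem_powersetCard] at hI
    exact Finset.sdiff_union_of_subset hI.2.1
  · rintro J hJ
    rw [Finset.mem_powersetCard] at hJ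
    apply Finset.union_sdiff_cancel_right
    refine Finset.disjoint_left.mpr fun x hx hxA => ?_
    have := hJ.1 hx
    simp only [Finset.mem_compl, Finset.mem_union] at this
    exact this (Or.inl hxA)

/-- Sum over disjoint pairs of fixed sizes, reindexed by the union. -/
lemma sum_disjoint_pairs {M : Type*} [AddCommMonoid M] (a b : ℕ)
    (F : Finset σ → M) :
    ∑ p ∈ (univ.powersetCard a ×ˢ univ.powersetCard b).filter
        (fun p : Finset σ × Finset σ => Disjoint p.1 p.2), F (p.1 ∪ p.2)
      = (a + b).choose a • ∑ T ∈ univ.powersetCard (a + b), F T := by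
  have key : ∑ p ∈ (univ.powersetCard a ×ˢ univ.powersetCard b).filter
        (fun p : Finset σ × Finset σ => Disjoint p.1 p.2), F (p.1 ∪ p.2)
      = ∑ x ∈ (univ.powersetCard (a + b)).sigma (fun T => T.powersetCard a), F x.1 := by
    apply Finset.sum_nbij' (fun p => ⟨p.1 ∪ p.2, p.1⟩) (fun x => (x.2, x.1 \ x.2))
    · rintro ⟨A, B⟩ hp
      simp only [mem_filter, mem_product, mem_powersetCard] at hp
      obtain ⟨⟨⟨-, hA⟩, -, hB⟩, hd⟩ := hp
      simp only [Finset.mem_sigma, mem_powersetCard]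
      exact ⟨⟨Finset.subset_univ _, by rw [Finset.card_union_of_disjoint hd, hA, hB]⟩,
        Finset.subset_union_left, hA⟩
    · rintro ⟨T, A⟩ hx
      simp only [Finset.mem_sigma, mem_powersetCard] at hx
      obtain ⟨⟨-, hT⟩, hAT, hA⟩ := hx
      simp only [mem_filter, mem_product, mem_powersetCard]
      exact ⟨⟨⟨Finset.subset_univ _, hA⟩, Finset.subset_univ _,
        by rw [Finset.card_sdiff_of_subset hAT, hT, hA]; omega⟩, Finset.disjoint_sdiff⟩
    · rintro ⟨A, B⟩ hp
      simp only [mem_filter, mem_product, mem_powersetCard] at hp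
      simp [Finset.union_sdiff_cancel_left hp.2]
    · rintro ⟨T, A⟩ hx
      simp only [Finset.mem_sigma, mem_powersetCard] at hx
      simp [Finset.union_sdiff_of_subset hx.2.1]
    · rintro ⟨A, B⟩ _; rfl
  rw [key, Finset.sum_sigma]
  rw [Finset.smul_sum]
  refine Finset.sum_congr rfl fun T hT => ?_
  rw [Finset.mem_powersetCard] at hT
  simp only []
  rw [Finset.sum_const, Finset.card_powersetCard, hT.2]

end Counting

/-- Key counting lemma for sums of products of elementary symmetric polys over
complementary subsets. -/
lemma key_sum (g a b : ℕ) (ha : a ≤ g) :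
    ∑ I ∈ (univ : Finset (Fin (2 * g + 1))).powersetCard g,
      (∑ A ∈ I.powersetCard a, ∏ i ∈ A, (X i : MvPolynomial (Fin (2 * g + 1)) ℚ)) *
      (∑ B ∈ Iᶜ.powersetCard b, ∏ i ∈ B, X i)
    = ((a + b).choose a * (2 * g + 1 - (a + b)).choose (g - a)) •
        ∑ T ∈ (univ : Finset (Fin (2 * g + 1))).powersetCard (a + b), ∏ i ∈ T, X i := by
  have step1 : ∀ I : Finset (Fin (2 * g + 1)),
      (∑ A ∈ I.powersetCard a, ∏ i ∈ A, (X i : MvPolynomial (Fin (2 * g + 1)) ℚ)) *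
      (∑ B ∈ Iᶜ.powersetCard b, ∏ i ∈ B, X i)
      = ∑ p ∈ I.powersetCard a ×ˢ Iᶜ.powersetCard b,
          (∏ i ∈ p.1, X i) * (∏ i ∈ p.2, X i) := by
    intro I
    rw [Finset.sum_mul_sum, Finset.sum_product]
  simp_rw [step1]
  rw [Finset.sum_comm' (t' := (univ.powersetCard a ×ˢ univ.powersetCard b).filter
        (fun p : Finset (Fin (2 * g + 1)) × Finset (Fin (2 * g + 1)) => Disjoint p.1 p.2))
      (s' := fun p => (univ.powersetCard g).filter (fun I => p.1 ⊆ I ∧ Disjoint p.2 I))]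
  · have step2 : ∀ p ∈ (univ.powersetCard a ×ˢ univ.powersetCard b).filter
        (fun p : Finset (Fin (2 * g + 1)) × Finset (Fin (2 * g + 1)) => Disjoint p.1 p.2),
        ∑ _I ∈ (univ.powersetCard g).filter (fun I => p.1 ⊆ I ∧ Disjoint p.2 I),
          ((∏ i ∈ p.1, X i) * (∏ i ∈ p.2, X i) : MvPolynomial (Fin (2 * g + 1)) ℚ)
        = (2 * g + 1 - (a + b)).choose (g - a) • ∏ i ∈ p.1 ∪ p.2, X i := by
      rintro ⟨A, B⟩ hp
      simp only [mem_filter, mem_product, mem_powersetCard] at hp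
      obtain ⟨⟨⟨-, hA⟩, -, hB⟩, hd⟩ := hp
      rw [Finset.sum_const, card_mid g A B hd (hA ▸ ha), ← Finset.prod_union hd,
        Fintype.card_fin, hA, hB]
    rw [Finset.sum_congr rfl step2, ← Finset.smul_sum,
      sum_disjoint_pairs a b (fun T => ∏ i ∈ T, (X i : MvPolynomial (Fin (2 * g + 1)) ℚ)),
      smul_smul, Nat.mul_comm ((2 * g + 1 - (a + b)).choose (g - a))]
  · rintro I ⟨A, B⟩
    simp only [mem_filter, mem_product, mem_powersetCard]
    constructor
    · rintro ⟨⟨-, hI⟩, ⟨hAI, hA⟩, hBI, hB⟩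
      have hBdisj : Disjoint B I := by
        refine Finset.disjoint_left.mpr fun x hx => ?_
        have := hBI hx; simp only [Finset.mem_compl] at this; exact this
      refine ⟨⟨⟨Finset.subset_univ _, hI⟩, hAI, hBdisj⟩,
        ⟨⟨Finset.subset_univ _, hA⟩, Finset.subset_univ _, hB⟩, ?_⟩
      exact Finset.disjoint_left.mpr fun x hx hxB =>
        Finset.disjoint_left.mp hBdisj hxB (hAI hx)
    · rintro ⟨⟨⟨-, hI⟩, hAI, hBI⟩, ⟨⟨-, hA⟩, -, hB⟩, -⟩
      refine ⟨⟨Finset.subset_univ _, hI⟩, ⟨hAI, hA⟩, ?_, hB⟩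
      intro x hx
      simp only [Finset.mem_compl]
      exact fun hxI => Finset.disjoint_left.mp hBI hx hxI

/-- The multiplicity appearing when summing products of complementary elementary symmetric
polynomials over all `g`-subsets. -/
def multW (g : ℕ) (α β : ℤ) : ℕ :=
  if 0 ≤ α ∧ 0 ≤ β then
    ((α + β).toNat.choose α.toNat * (2 * g + 1 - (α + β).toNat).choose (g - α.toNat))
  else 0

lemma esymmOn_natCast (g : ℕ) (I : Finset (Fin (2 * g + 1))) (m : ℕ) :
    esymmOn g I (m : ℤ) = ∑ A ∈ I.powersetCard m, ∏ i ∈ A, X i := by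
  rw [esymmOn, if_neg (by exact_mod_cast not_lt.mpr (Int.natCast_nonneg m)),
    Int.toNat_natCast, Finset.esymm_map_val]

lemma esymmOn_neg (g : ℕ) (I : Finset (Fin (2 * g + 1))) {m : ℤ} (hm : m < 0) :
    esymmOn g I m = 0 := if_pos hm

lemma sum_esymmOn_mul (g : ℕ) (α β : ℤ) (hαg : α ≤ (g : ℤ)) :
    ∑ I ∈ (univ : Finset (Fin (2 * g + 1))).powersetCard g,
        esymmOn g I α * esymmOn g Iᶜ β
      = multW g α β •
          ∑ T ∈ (univ : Finset (Fin (2 * g + 1))).powersetCard ((α + β).toNat),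
            ∏ i ∈ T, X i := by
  by_cases hα : 0 ≤ α
  · by_cases hβ : 0 ≤ β
    · obtain ⟨a, rfl⟩ := Int.eq_ofNat_of_zero_le hα
      obtain ⟨b, rfl⟩ := Int.eq_ofNat_of_zero_le hβ
      rw [multW, if_pos ⟨hα, hβ⟩]
      simp_rw [esymmOn_natCast]
      have h1 : ((a : ℤ) + (b : ℤ)).toNat = a + b := by omega
      have h2 : ((a : ℤ)).toNat = a := Int.toNat_natCast a
      rw [h1, h2]
      exact key_sum g a b (by exact_mod_cast hαg)
    · push_neg at hβ
      rw [Finset.sum_eq_zero (fun I _ => by rw [esymmOn_neg g Iᶜ hβ, mul_zero]),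
        multW, if_neg (by omega), zero_smul]
  · push_neg at hα
    rw [Finset.sum_eq_zero (fun I _ => by rw [esymmOn_neg g I hα, zero_mul]),
      multW, if_neg (by omega), zero_smul]

/-- Per-term coefficient identity relating `multW` and the `Cz` products. -/
lemma per_coef (g k j : ℕ) (α β : ℤ) (hkj : k + j ≤ 2 * g)
    (hαg : α ≤ (g : ℤ)) (hβ : β ≤ (g : ℤ) + 1)
    (hsum : α + β = (2 * g + 1 : ℤ) - (k + j)) :
    (2 * g + 1).choose (2 * g + 1 - (k + j)) * multW g α β
      = (2 * g + 1).choose g * (Cz g α * Cz (g + 1) β) := by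
  by_cases hα : 0 ≤ α
  · by_cases hβ0 : 0 ≤ β
    · obtain ⟨a, rfl⟩ := Int.eq_ofNat_of_zero_le hα
      obtain ⟨b, rfl⟩ := Int.eq_ofNat_of_zero_le hβ0
      rw [multW, if_pos ⟨hα, hβ0⟩, Cz, if_neg (by omega), Cz, if_neg (by omega),
        Int.toNat_natCast, Int.toNat_natCast]
      have h1 : ((a : ℤ) + (b : ℤ)).toNat = a + b := by omega
      rw [h1]
      have ha : a ≤ g := by exact_mod_cast hαg
      have hb : b ≤ g + 1 := by exact_mod_cast hβ
      have hab : a + b = 2 * g + 1 - (k + j) := by omega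
      have e1 : 2 * g + 1 - (a + b) = k + j := by omega
      have e2 : b = 2 * g + 1 - (k + j) - a := by omega
      rw [e1, hab, e2]
      exact main_nat g k j a hkj ha (by omega) (by omega)
    · push_neg at hβ0
      have hz : Cz (g + 1) β = 0 := by rw [Cz, if_pos hβ0]
      rw [multW, if_neg (by omega), hz]
      ring
  · push_neg at hα
    have hz : Cz g α = 0 := by rw [Cz, if_pos hα]
    rw [multW, if_neg (by omega), hz]
    ring

theorem lambda_matrix_entries (g k j : ℕ) (hg : 1 ≤ g)
    (hk : 1 ≤ k) (hkj : k ≤ j) (hj : j ≤ g) :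
    (-1 : MvPolynomial (Fin (2 * g + 1)) ℚ) ^ (k + j + 1) * 4 *
      ∑ I ∈ (Finset.univ : Finset (Fin (2 * g + 1))).powersetCard g,
        ∑ n ∈ Finset.Icc 1 k,
          (n : MvPolynomial (Fin (2 * g + 1)) ℚ) *
            (esymmOn g I ((g : ℤ) - k + n) * esymmOn g Iᶜ ((g : ℤ) - j - n + 1) +
              esymmOn g I ((g : ℤ) - j - n) * esymmOn g Iᶜ ((g : ℤ) + n - k + 1)) =
    lamPoly g (k + j) *
      C (((2 * g + 1).choose g : ℚ) / ((2 * g + 1).choose (2 * g + 1 - k - j) : ℚ)) *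
      C ((∑ n ∈ Finset.Icc 1 k, (n : ℚ) *
          ((Cz g ((g : ℤ) - k + n) * Cz (g + 1) ((g : ℤ) - j - n + 1) +
            Cz g ((g : ℤ) - j - n) * Cz (g + 1) ((g : ℤ) - k + n + 1) : ℕ) : ℚ))) := by
  have hkj2 : k + j ≤ 2 * g := by omega
  rw [show 2 * g + 1 - k - j = 2 * g + 1 - (k + j) from by omega]
  set d : ℕ := 2 * g + 1 - (k + j) with hdd
  set P : MvPolynomial (Fin (2 * g + 1)) ℚ :=
    ∑ T ∈ (univ : Finset (Fin (2 * g + 1))).powersetCard d, ∏ i ∈ T, X i with hP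
  have hinner : ∀ n ∈ Finset.Icc 1 k,
      (∑ I ∈ (univ : Finset (Fin (2 * g + 1))).powersetCard g,
        (n : MvPolynomial (Fin (2 * g + 1)) ℚ) *
          (esymmOn g I ((g : ℤ) - k + n) * esymmOn g Iᶜ ((g : ℤ) - j - n + 1) +
            esymmOn g I ((g : ℤ) - j - n) * esymmOn g Iᶜ ((g : ℤ) + n - k + 1)))
      = C ((n : ℚ) * ((multW g ((g : ℤ) - k + n) ((g : ℤ) - j - n + 1) +
            multW g ((g : ℤ) - j - n) ((g : ℤ) + n - k + 1) : ℕ) : ℚ)) * P := by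
    intro n hn
    rw [Finset.mem_Icc] at hn
    rw [← Finset.mul_sum, Finset.sum_add_distrib,
      sum_esymmOn_mul g _ _ (by push_cast; omega),
      sum_esymmOn_mul g _ _ (by push_cast; omega)]
    have e1 : (((g : ℤ) - k + n) + ((g : ℤ) - j - n + 1)).toNat = d := by omega
    have e2 : (((g : ℤ) - j - n) + ((g : ℤ) + n - k + 1)).toNat = d := by omega
    rw [e1, e2, ← hP, ← add_smul, nsmul_eq_mul, map_mul,
      map_natCast (C : ℚ →+* MvPolynomial (Fin (2 * g + 1)) ℚ),
      map_natCast (C : ℚ →+* MvPolynomial (Fin (2 * g + 1)) ℚ), mul_assoc]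
  rw [Finset.sum_comm, Finset.sum_congr rfl hinner, ← Finset.sum_mul, ← map_sum]
  have hsign : (-1 : ℚ) ^ d = (-1 : ℚ) ^ (k + j + 1) := by
    have h2 : d % 2 = (k + j + 1) % 2 := by omega
    conv_lhs => rw [← Nat.div_add_mod d 2]
    conv_rhs => rw [← Nat.div_add_mod (k + j + 1) 2]
    rw [pow_add, pow_add, pow_mul, pow_mul, neg_one_sq, one_pow, one_pow, h2]
  have hlam : lamPoly g (k + j) = C ((-1 : ℚ) ^ (k + j + 1) * 4) * P := by
    rw [lamPoly, Finset.esymm_map_val, ← hdd]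
    have hPP : (((univ : Finset (Fin (2 * g + 1))).powersetCard d).sum
        fun t => t.prod X) = P := rfl
    rw [hPP, ← hsign, map_mul, map_pow, map_neg, map_one, map_ofNat]
    ring
  have hsignP : (-1 : MvPolynomial (Fin (2 * g + 1)) ℚ) ^ (k + j + 1) * 4
      = C ((-1 : ℚ) ^ (k + j + 1) * 4) := by
    rw [map_mul, map_pow, map_neg, map_one, map_ofNat]
  rw [hlam, hsignP]
  have hCB : ((2 * g + 1).choose d : ℚ) ≠ 0 :=
    Nat.cast_ne_zero.mpr (Nat.choose_pos (by omega)).ne'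
  have hW : (∑ n ∈ Finset.Icc 1 k, (n : ℚ) *
        ((multW g ((g : ℤ) - k + n) ((g : ℤ) - j - n + 1) +
          multW g ((g : ℤ) - j - n) ((g : ℤ) + n - k + 1) : ℕ) : ℚ))
      = (((2 * g + 1).choose g : ℚ) / ((2 * g + 1).choose d : ℚ)) *
        (∑ n ∈ Finset.Icc 1 k, (n : ℚ) *
          ((Cz g ((g : ℤ) - k + n) * Cz (g + 1) ((g : ℤ) - j - n + 1) +
            Cz g ((g : ℤ) - j - n) * Cz (g + 1) ((g : ℤ) - k + n + 1) : ℕ) : ℚ)) := by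
    rw [div_mul_eq_mul_div, eq_div_iff hCB, Finset.sum_mul, Finset.mul_sum]
    refine Finset.sum_congr rfl fun n hn => ?_
    rw [Finset.mem_Icc] at hn
    have eβ : (g : ℤ) - k + n + 1 = (g : ℤ) + n - k + 1 := by ring
    rw [eβ]
    have t1 := per_coef g k j ((g : ℤ) - k + n) ((g : ℤ) - j - n + 1) hkj2
      (by push_cast; omega) (by push_cast; omega) (by push_cast; ring)
    have t2 := per_coef g k j ((g : ℤ) - j - n) ((g : ℤ) + n - k + 1) hkj2
      (by push_cast; omega) (by push_cast; omega) (by push_cast; ring)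
    have t1' : ((2 * g + 1).choose d : ℚ) *
        (multW g ((g : ℤ) - k + n) ((g : ℤ) - j - n + 1) : ℚ)
        = ((2 * g + 1).choose g : ℚ) *
          ((Cz g ((g : ℤ) - k + n) : ℚ) * (Cz (g + 1) ((g : ℤ) - j - n + 1) : ℚ)) := by
      exact_mod_cast t1
    have t2' : ((2 * g + 1).choose d : ℚ) *
        (multW g ((g : ℤ) - j - n) ((g : ℤ) + n - k + 1) : ℚ)
        = ((2 * g + 1).choose g : ℚ) *
          ((Cz g ((g : ℤ) - j - n) : ℚ) * (Cz (g + 1) ((g : ℤ) + n - k + 1) : ℚ)) := by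
      exact_mod_cast t2
    push_cast
    linear_combination (n : ℚ) * t1' + (n : ℚ) * t2'
  conv_lhs => rw [hW]
  rw [map_mul, map_mul]
  ring
end
end

section
/- Fix an integer g ≥ 1 and define, for 1 ≤ i ≤ j ≤ g, Λ_{i,j} = λ_{i+j} · ( C(2g+1, g) / C(2g+1, 2g+1−i−j) ) · Σ_{n=1}^{i} n · ( C(g, g−i+n)·C(g+1, g−j−n+1) + C(g, g−j−n)·C(g+1, g−i+n+1) ), extended symmetrically by Λ_{j,i} = Λ_{i,j}; here C(a,b) denotes the binomial coefficient (with C(a,b)=0 when b<0 or b>a). Then for every integer k with 2 ≤ k ≤ 2g, the anti-diagonal sum satisfies Σ_{i+j=k, 1≤i,j≤g} Λ_{i,j} = λ_k · ( N_g / (4g+2) ) · ( (1/2)·k·(2g+2−k) + (1/4)·(2g+1)·((−1)^k − 1) ), where N_g = C(2g+1, g). -/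
/- STATEMENT 1: the anti-diagonal sums of the matrix Λ_g satisfy
   Σ_{i+j=k} Λ_{i,j} = λ_k (N_g/(4g+2)) ((1/2)k(2g+2−k) + (1/4)(2g+1)((−1)^k−1)),
   as an identity in ℚ[e₁,…,e_{2g+1}]. -/

open MvPolynomial Finset

noncomputable section

/-- The entry `Λ_{i,j}` for `1 ≤ i ≤ j ≤ g`:
`Λ_{i,j} = λ_{i+j} (C(2g+1,g)/C(2g+1,2g+1−i−j)) Σ_{n=1}^{i} n (C(g,g−i+n)C(g+1,g−j−n+1)
  + C(g,g−j−n)C(g+1,g−i+n+1))`. -/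
def LamEntryLE (g i j : ℕ) : MvPolynomial (Fin (2 * g + 1)) ℚ :=
  lamPoly g (i + j) *
    C (((2 * g + 1).choose g : ℚ) / ((2 * g + 1).choose (2 * g + 1 - i - j) : ℚ)) *
    C ((∑ n ∈ Finset.Icc 1 i, (n : ℚ) *
        ((Cz g ((g : ℤ) - i + n) * Cz (g + 1) ((g : ℤ) - j - n + 1) +
          Cz g ((g : ℤ) - j - n) * Cz (g + 1) ((g : ℤ) - i + n + 1) : ℕ) : ℚ)))

/-- The entry `Λ_{i,j}`, extended symmetrically by `Λ_{j,i} = Λ_{i,j}`. -/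
def LamEntry (g i j : ℕ) : MvPolynomial (Fin (2 * g + 1)) ℚ :=
  LamEntryLE g (min i j) (max i j)

open Finset

/-- weight w(a) = C(g,a)C(g+1,k-a) + C(g,k-a)C(g+1,a) -/
def wAux (g k a : ℕ) : ℕ :=
  g.choose a * (g+1).choose (k-a) + g.choose (k-a) * (g+1).choose a

lemma wAux_symm (g k a : ℕ) (h : a ≤ k) : wAux g k (k-a) = wAux g k a := by
  unfold wAux
  rw [Nat.sub_sub_self h]; ring

lemma wAux_eq_zero (g k a : ℕ) (h : g+1 < a ∨ g+1 < k-a) : wAux g k a = 0 := by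
  unfold wAux
  rcases h with h | h
  · rw [Nat.choose_eq_zero_of_lt (show g < a by omega),
      Nat.choose_eq_zero_of_lt h]; ring
  · rw [Nat.choose_eq_zero_of_lt (show g < k - a by omega),
      Nat.choose_eq_zero_of_lt h]; ring

lemma vander (g1 g2 k : ℕ) :
    ∑ a ∈ Finset.range (k+1), g1.choose a * g2.choose (k-a) = (g1+g2).choose k := by
  rw [Nat.add_choose_eq, Finset.Nat.sum_antidiagonal_eq_sum_range_succ_mk]

lemma sum_wAux (g k : ℕ) :
    ∑ a ∈ Finset.range (k+1), wAux g k a = 2 * (2*g+1).choose k := by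
  unfold wAux
  rw [Finset.sum_add_distrib]
  have h1 := vander g (g+1) k
  have h2 := vander (g+1) g k
  have e2 : ∑ a ∈ Finset.range (k+1), g.choose (k-a) * (g+1).choose a
      = ∑ a ∈ Finset.range (k+1), (g+1).choose a * g.choose (k-a) := by
    exact Finset.sum_congr rfl fun a _ => mul_comm _ _
  rw [e2, h1, h2]
  have : g + (g+1) = 2*g+1 := by ring
  rw [this]
  have : (g+1) + g = 2*g+1 := by ring
  rw [this]; ring

lemma choose_shift (g a : ℕ) (hg : 1 ≤ g) :
    (a+1) * g.choose (a+1) = g * (g-1).choose a := by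
  have h := Nat.add_one_mul_choose_eq (g-1) a
  rw [show g-1+1 = g by omega] at h
  rw [h]; ring

lemma moment (g1 g2 k : ℕ) (h1 : 1 ≤ g1) (h2 : 1 ≤ g2) (hk : 2 ≤ k) :
    ∑ a ∈ Finset.range (k+1), a * (k-a) * (g1.choose a * g2.choose (k-a))
      = g1 * g2 * (g1+g2-2).choose (k-2) := by
  rw [Finset.sum_range_succ' _ k]
  have hz : (0:ℕ) * (k-0) * (g1.choose 0 * g2.choose (k-0)) = 0 := by ring
  rw [hz, add_zero]
  have hk1 : k = (k-1) + 1 := by omega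
  rw [hk1, Finset.sum_range_succ]
  have hz2 : (k-1+1) * (k-1+1-(k-1+1)) * (g1.choose (k-1+1) * g2.choose (k-1+1-(k-1+1))) = 0 := by
    simp
  rw [hz2, add_zero]
  have step : ∀ a ∈ Finset.range (k-1),
      (a+1) * (k-1+1-(a+1)) * (g1.choose (a+1) * g2.choose (k-1+1-(a+1)))
      = g1 * g2 * ((g1-1).choose a * (g2-1).choose ((k-2)-a)) := by
    intro a ha
    rw [Finset.mem_range] at ha
    have e1 : k-1+1-(a+1) = (k-2-a)+1 := by omega
    rw [e1]
    have c1 := choose_shift g1 a h1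
    have c2 := choose_shift g2 (k-2-a) h2
    calc (a+1) * ((k-2-a)+1) * (g1.choose (a+1) * g2.choose ((k-2-a)+1))
        = ((a+1) * g1.choose (a+1)) * (((k-2-a)+1) * g2.choose ((k-2-a)+1)) := by ring
      _ = (g1 * (g1-1).choose a) * (g2 * (g2-1).choose (k-2-a)) := by rw [c1, c2]
      _ = g1 * g2 * ((g1-1).choose a * (g2-1).choose ((k-2)-a)) := by ring
  rw [Finset.sum_congr rfl step, ← Finset.mul_sum]
  have hr : k - 1 = (k-2) + 1 := by omega
  rw [hr, vander (g1-1) (g2-1) (k-2)]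
  congr 2
  omega

lemma mom_wAux (g k : ℕ) (hg : 1 ≤ g) (hk : 2 ≤ k) :
    ∑ a ∈ Finset.range (k+1), a * (k-a) * wAux g k a
      = 2 * (g * (g+1) * (2*g-1).choose (k-2)) := by
  unfold wAux
  have e : ∀ a ∈ Finset.range (k+1),
      a * (k-a) * (g.choose a * (g+1).choose (k-a) + g.choose (k-a) * (g+1).choose a)
      = a * (k-a) * (g.choose a * (g+1).choose (k-a))
        + a * (k-a) * ((g+1).choose a * g.choose (k-a)) := by
    intro a _; ring
  rw [Finset.sum_congr rfl e, Finset.sum_add_distrib,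
    moment g (g+1) k hg (by omega) hk, moment (g+1) g k (by omega) hg hk]
  have e1 : g + (g+1) - 2 = 2*g-1 := by omega
  have e2 : (g+1) + g - 2 = 2*g-1 := by omega
  rw [e1, e2]; ring

/-- c(a) = Σ_{i∈D} (min(i,k−i) − a) -/
def cAux (g k a : ℕ) : ℕ :=
  ∑ i ∈ Finset.Icc (max 1 (k-g)) (min g (k-1)), (min i (k-i) - a)

lemma cAux_rec (g k a : ℕ) (hg : 1 ≤ g) (hk2 : 2 ≤ k) (hk : k ≤ 2*g)
    (ha : k ≤ a + g + 1) :
    cAux g k a = cAux g k (a+1) + (k - (2*a+1)) := by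
  unfold cAux
  have h1 : ∀ i ∈ Finset.Icc (max 1 (k-g)) (min g (k-1)),
      min i (k-i) - a = (min i (k-i) - (a+1)) + (if a+1 ≤ min i (k-i) then 1 else 0) := by
    intro i _; split <;> omega
  rw [Finset.sum_congr rfl h1, Finset.sum_add_distrib]
  congr 1
  have hset : Finset.filter (fun i => a+1 ≤ min i (k-i)) (Finset.Icc (max 1 (k-g)) (min g (k-1)))
      = Finset.Icc (a+1) (k-(a+1)) := by
    ext i
    simp only [Finset.mem_filter, Finset.mem_Icc]
    omega
  rw [Finset.sum_boole, hset, Nat.card_Icc, Nat.cast_id]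
  omega

lemma cAux_zero (g k a : ℕ) (ha : k/2 ≤ a) : cAux g k a = 0 := by
  unfold cAux
  apply Finset.sum_eq_zero
  intro i hi
  rw [Finset.mem_Icc] at hi
  omega

lemma cAux_closed (g k : ℕ) (hg : 1 ≤ g) (hk2 : 2 ≤ k) (hk : k ≤ 2*g) :
    ∀ d a, k ≤ 2*(a+d)+1 → k ≤ a + g + 1 →
      cAux g k a = (k/2 - a) * ((k - k/2) - a) := by
  intro d
  induction d with
  | zero =>
    intro a h1 _
    have h0 : k/2 - a = 0 := by omega
    rw [h0, zero_mul]
    exact cAux_zero g k a (by omega)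
  | succ d ih =>
    intro a h1 h2
    by_cases hc : k ≤ 2*(a+d)+1
    · exact ih a hc h2
    · push_neg at hc
      rw [cAux_rec g k a hg hk2 hk h2, ih (a+1) (by omega) (by omega)]
      have hx : k/2 - a = (k/2 - (a+1)) + 1 := by omega
      have hy : (k - k/2) - a = ((k - k/2) - (a+1)) + 1 := by omega
      rw [hx, hy]
      have expand : ((k/2 - (a+1)) + 1) * (((k - k/2) - (a+1)) + 1)
          = (k/2 - (a+1)) * ((k - k/2) - (a+1))
            + ((k/2 - (a+1)) + ((k - k/2) - (a+1)) + 1) := by ring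
      rw [expand]
      have : (k/2 - (a+1)) + ((k - k/2) - (a+1)) + 1 = k - (2*a+1) := by omega
      rw [this]

lemma cAux_formula (g k a : ℕ) (hg : 1 ≤ g) (hk2 : 2 ≤ k) (hk : k ≤ 2*g)
    (ha : k ≤ a + g + 1) :
    cAux g k a = (k/2 - a) * ((k - k/2) - a) :=
  cAux_closed g k hg hk2 hk k a (by omega) ha

lemma coeffQ (g k a : ℕ) (hg : 1 ≤ g) (hk2 : 2 ≤ k) (hk : k ≤ 2*g)
    (h1 : k ≤ a + g + 1) (h2 : a ≤ g + 1) (ha : a ≤ k) :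
    ((cAux g k a : ℚ) + (cAux g k (k-a) : ℚ))
      = (a:ℚ) * ((a:ℚ) - (k:ℚ)) + ((k:ℚ)^2/4 - (1 - (-1:ℚ)^k)/8) := by
  rw [cAux_formula g k a hg hk2 hk h1,
    cAux_formula g k (k-a) hg hk2 hk (by omega)]
  rcases Nat.even_or_odd k with hpar | hpar
  · obtain ⟨m, hm⟩ := hpar
    have hk2m : k = 2*m := by omega
    subst hk2m
    have hhalf : 2*m/2 = m := by omega
    have hneg : (-1:ℚ)^(2*m) = 1 := by
      rw [pow_mul]; norm_num
    rw [hhalf, hneg]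
    have e1 : 2*m - m = m := by omega
    rw [e1]
    have e2 : m - (2*m - a) = a - m := by omega
    rw [e2]
    rcases le_total a m with hle | hle
    · have z1 : a - m = 0 := by omega
      rw [z1]
      push_cast [Nat.cast_sub hle]
      ring
    · have z1 : m - a = 0 := by omega
      rw [z1]
      push_cast [Nat.cast_sub hle]
      ring
  · obtain ⟨m, hm⟩ := hpar
    subst hm
    have hhalf : (2*m+1)/2 = m := by omega
    have hneg : (-1:ℚ)^(2*m+1) = -1 := by
      rw [pow_succ, pow_mul]; norm_num
    rw [hhalf, hneg]
    have e1 : 2*m+1 - m = m+1 := by omega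
    rw [e1]
    have e2 : m - (2*m+1 - a) = a - (m+1) := by omega
    rw [e2]
    have e3 : m+1 - (2*m+1 - a) = a - m := by omega
    rw [e3]
    rcases le_or_gt a m with hle | hlt
    · have z1 : a - (m+1) = 0 := by omega
      rw [z1]
      push_cast [Nat.cast_sub hle, Nat.cast_sub (show a ≤ m+1 by omega)]
      ring
    · have z1 : m - a = 0 := by omega
      rw [z1]
      push_cast [Nat.cast_sub (show m+1 ≤ a by omega), Nat.cast_sub (show m ≤ a by omega)]
      ring

lemma scalar_core (g k : ℕ) (hg : 1 ≤ g) (hk2 : 2 ≤ k) (hk : k ≤ 2*g) :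
    ∑ i ∈ Finset.Icc (max 1 (k-g)) (min g (k-1)), ∑ a ∈ Finset.range (k+1),
        ((min i (k-i) - a : ℕ) : ℚ) * (wAux g k a : ℚ)
    = ((2*g+1).choose k : ℚ) *
        (((1/2)*(k:ℚ)*(2*(g:ℚ)+2-(k:ℚ)) + (1/4)*(2*(g:ℚ)+1)*((-1:ℚ)^k - 1))
          / (2*(2*(g:ℚ)+1))) := by
  rw [Finset.sum_comm]
  have swap : ∀ a ∈ Finset.range (k+1),
      (∑ i ∈ Finset.Icc (max 1 (k-g)) (min g (k-1)),
        ((min i (k-i) - a : ℕ) : ℚ) * (wAux g k a : ℚ))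
      = (cAux g k a : ℚ) * (wAux g k a : ℚ) := by
    intro a _
    rw [← Finset.sum_mul]
    congr 1
    unfold cAux
    rw [Nat.cast_sum]
  rw [Finset.sum_congr rfl swap]
  have refl1 : ∑ a ∈ Finset.range (k+1), (cAux g k (k-a) : ℚ) * (wAux g k a : ℚ)
      = ∑ a ∈ Finset.range (k+1), (cAux g k a : ℚ) * (wAux g k a : ℚ) := by
    apply Finset.sum_nbij' (fun a => k - a) (fun a => k - a)
    · intro a ha; rw [Finset.mem_range] at *; omega
    · intro a ha; rw [Finset.mem_range] at *; omega
    · intro a ha; rw [Finset.mem_range] at ha; omega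
    · intro a ha; rw [Finset.mem_range] at ha; omega
    · intro a ha; rw [Finset.mem_range] at ha
      rw [wAux_symm g k a (by omega)]
  have coeff : ∀ a ∈ Finset.range (k+1),
      ((cAux g k a : ℚ) + (cAux g k (k-a) : ℚ)) * (wAux g k a : ℚ)
      = ((a:ℚ)*((a:ℚ)-(k:ℚ)) + ((k:ℚ)^2/4 - (1-(-1:ℚ)^k)/8)) * (wAux g k a : ℚ) := by
    intro a ha; rw [Finset.mem_range] at ha
    by_cases hcase : k ≤ a + g + 1 ∧ a ≤ g + 1
    · rw [coeffQ g k a hg hk2 hk hcase.1 hcase.2 (by omega)]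
    · have hw : wAux g k a = 0 := by
        apply wAux_eq_zero; omega
      rw [hw]; push_cast; ring
  have m0 : ∑ a ∈ Finset.range (k+1), (wAux g k a : ℚ)
      = 2 * ((2*g+1).choose k : ℚ) := by
    rw [← Nat.cast_sum, sum_wAux]; push_cast; ring
  have m2 : ∑ a ∈ Finset.range (k+1), (a:ℚ) * ((k:ℚ) - (a:ℚ)) * (wAux g k a : ℚ)
      = 2 * (g:ℚ) * ((g:ℚ)+1) * ((2*g-1).choose (k-2) : ℚ) := by
    have e : ∀ a ∈ Finset.range (k+1),
        (a:ℚ)*((k:ℚ)-(a:ℚ))*(wAux g k a : ℚ) = ((a*(k-a)*wAux g k a : ℕ) : ℚ) := by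
      intro a ha; rw [Finset.mem_range] at ha
      push_cast [Nat.cast_sub (show a ≤ k by omega)]; ring
    rw [Finset.sum_congr rfl e, ← Nat.cast_sum, mom_wAux g k hg hk2]
    push_cast; ring
  -- doubling: S = (1/2) Σ (cAux a + cAux (k-a)) w a
  have hdouble : ∑ a ∈ Finset.range (k+1), (cAux g k a : ℚ) * (wAux g k a : ℚ)
      = (1/2) * ∑ a ∈ Finset.range (k+1),
          ((cAux g k a : ℚ) + (cAux g k (k-a) : ℚ)) * (wAux g k a : ℚ) := by
    have : ∑ a ∈ Finset.range (k+1),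
        ((cAux g k a : ℚ) + (cAux g k (k-a) : ℚ)) * (wAux g k a : ℚ)
        = (∑ a ∈ Finset.range (k+1), (cAux g k a : ℚ) * (wAux g k a : ℚ))
          + ∑ a ∈ Finset.range (k+1), (cAux g k (k-a) : ℚ) * (wAux g k a : ℚ) := by
      rw [← Finset.sum_add_distrib]
      exact Finset.sum_congr rfl fun a _ => by ring
    rw [this, refl1]; ring
  rw [hdouble, Finset.sum_congr rfl coeff]
  have expand : ∑ a ∈ Finset.range (k+1),
      ((a:ℚ)*((a:ℚ)-(k:ℚ)) + ((k:ℚ)^2/4 - (1-(-1:ℚ)^k)/8)) * (wAux g k a : ℚ)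
      = -(∑ a ∈ Finset.range (k+1), (a:ℚ) * ((k:ℚ) - (a:ℚ)) * (wAux g k a : ℚ))
        + ((k:ℚ)^2/4 - (1-(-1:ℚ)^k)/8) * ∑ a ∈ Finset.range (k+1), (wAux g k a : ℚ) := by
    rw [← Finset.sum_neg_distrib, Finset.mul_sum, ← Finset.sum_add_distrib]
    exact Finset.sum_congr rfl fun a _ => by ring
  rw [expand, m0, m2]
  -- final arithmetic with the choose relations
  have rel1 : (2*(g:ℚ)+1) * ((2*g).choose (k-1) : ℚ) = ((2*g+1).choose k : ℚ) * (k:ℚ) := by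
    have h := Nat.add_one_mul_choose_eq (2*g) (k-1)
    rw [show k-1+1 = k by omega] at h
    have := congrArg (fun n : ℕ => (n:ℚ)) h
    push_cast at this
    linarith [this]
  have rel2 : (2*(g:ℚ)) * ((2*g-1).choose (k-2) : ℚ) = ((2*g).choose (k-1) : ℚ) * ((k:ℚ)-1) := by
    have h := Nat.add_one_mul_choose_eq (2*g-1) (k-2)
    rw [show 2*g-1+1 = 2*g by omega, show k-2+1 = k-1 by omega] at h
    have := congrArg (fun n : ℕ => (n:ℚ)) h
    push_cast [Nat.cast_sub (show 1 ≤ k by omega)] at this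
    linarith [this]
  have hg0 : (g:ℚ) ≠ 0 := by
    have : (0:ℚ) < g := by exact_mod_cast hg
    exact ne_of_gt this
  have h2g1 : (2*(g:ℚ)+1) ≠ 0 := by positivity
  have hC1 : ((2*g).choose (k-1) : ℚ) = ((2*g+1).choose k : ℚ) * (k:ℚ) / (2*(g:ℚ)+1) := by
    field_simp
    linarith [rel1]
  have hC2 : ((2*g-1).choose (k-2) : ℚ)
      = ((2*g).choose (k-1) : ℚ) * ((k:ℚ)-1) / (2*(g:ℚ)) := by
    field_simp
    linarith [rel2]
  rw [hC2, hC1]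
  field_simp
  ring

lemma inner_eq (g k m M : ℕ) (h1 : 1 ≤ m) (h2 : m ≤ g) (h3 : M ≤ g)
    (h4 : m + M = k) (h5 : m ≤ M) :
    (∑ n ∈ Finset.Icc 1 m, (n : ℚ) *
        ((Cz g ((g : ℤ) - m + n) * Cz (g + 1) ((g : ℤ) - M - n + 1) +
          Cz g ((g : ℤ) - M - n) * Cz (g + 1) ((g : ℤ) - m + n + 1) : ℕ) : ℚ))
    = ∑ a ∈ Finset.range (k+1), ((m - a : ℕ) : ℚ) * (wAux g k a : ℚ) := by
  have key : ∀ n ∈ Finset.Icc 1 m,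
      (n : ℚ) * ((Cz g ((g:ℤ)-m+n) * Cz (g+1) ((g:ℤ)-M-n+1) +
        Cz g ((g:ℤ)-M-n) * Cz (g+1) ((g:ℤ)-m+n+1) : ℕ) : ℚ)
      = ((m - (m-n) : ℕ):ℚ) * (wAux g k (m-n) : ℚ) := by
    intro n hn
    rw [Finset.mem_Icc] at hn
    have cA : Cz g ((g:ℤ)-m+n) = g.choose (m-n) := by
      unfold Cz
      rw [if_neg (by omega), show ((g:ℤ)-(m:ℕ)+(n:ℕ)).toNat = g - (m-n) by omega]
      exact Nat.choose_symm (by omega)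
    have cB : Cz (g+1) ((g:ℤ)-M-n+1) = (g+1).choose (k - (m-n)) := by
      unfold Cz
      by_cases hb : (g:ℤ)-(M:ℕ)-(n:ℕ)+1 < 0
      · rw [if_pos hb]
        symm; exact Nat.choose_eq_zero_of_lt (by omega)
      · rw [if_neg hb, show ((g:ℤ)-(M:ℕ)-(n:ℕ)+1).toNat = (g+1) - (k - (m-n)) by omega]
        exact Nat.choose_symm (by omega)
    have cC : Cz g ((g:ℤ)-M-n) = g.choose (k - (m-n)) := by
      unfold Cz
      by_cases hb : (g:ℤ)-(M:ℕ)-(n:ℕ) < 0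
      · rw [if_pos hb]
        symm; exact Nat.choose_eq_zero_of_lt (by omega)
      · rw [if_neg hb, show ((g:ℤ)-(M:ℕ)-(n:ℕ)).toNat = g - (k - (m-n)) by omega]
        exact Nat.choose_symm (by omega)
    have cD : Cz (g+1) ((g:ℤ)-m+n+1) = (g+1).choose (m-n) := by
      unfold Cz
      rw [if_neg (by omega), show ((g:ℤ)-(m:ℕ)+(n:ℕ)+1).toNat = (g+1) - (m-n) by omega]
      exact Nat.choose_symm (by omega)
    rw [cA, cB, cC, cD, show m - (m - n) = n by omega]
    rfl
  rw [Finset.sum_congr rfl key]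
  have reindex : ∑ n ∈ Finset.Icc 1 m, ((m - (m-n) : ℕ):ℚ) * (wAux g k (m-n) : ℚ)
      = ∑ a ∈ Finset.range m, ((m - a : ℕ):ℚ) * (wAux g k a : ℚ) := by
    apply Finset.sum_nbij' (fun n => m - n) (fun a => m - a)
    · intro n hn; rw [Finset.mem_Icc] at hn; rw [Finset.mem_range]; omega
    · intro a ha; rw [Finset.mem_range] at ha; rw [Finset.mem_Icc]; omega
    · intro n hn; rw [Finset.mem_Icc] at hn; omega
    · intro a ha; rw [Finset.mem_range] at ha; omega
    · intro n _; rfl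
  rw [reindex]
  apply Finset.sum_subset
  · intro a ha
    rw [Finset.mem_range] at *
    omega
  · intro a _ ha
    rw [Finset.mem_range] at ha
    rw [show m - a = 0 by omega]
    norm_num


theorem lambda_antidiagonal_sum (g : ℕ) (hg : 1 ≤ g) (k : ℕ) (hk2 : 2 ≤ k)
    (hk : k ≤ 2 * g) :
    ∑ p ∈ ((Finset.Icc 1 g) ×ˢ (Finset.Icc 1 g)).filter (fun p => p.1 + p.2 = k),
        LamEntry g p.1 p.2 =
      lamPoly g k *
        C ((((2 * g + 1).choose g : ℚ) / (4 * (g : ℚ) + 2)) *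
          ((1 / 2) * (k : ℚ) * (2 * (g : ℚ) + 2 - (k : ℚ)) +
            (1 / 4) * (2 * (g : ℚ) + 1) * ((-1 : ℚ) ^ k - 1))) := by
  have hB1 : ∑ p ∈ ((Finset.Icc 1 g) ×ˢ (Finset.Icc 1 g)).filter (fun p => p.1 + p.2 = k),
        LamEntry g p.1 p.2
      = ∑ i ∈ Finset.Icc (max 1 (k-g)) (min g (k-1)), LamEntry g i (k-i) := by
    apply Finset.sum_nbij' (fun p => p.1) (fun i => (i, k-i))
    · intro p hp
      simp only [Finset.mem_filter, Finset.mem_product, Finset.mem_Icc] at *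
      omega
    · intro i hi
      simp only [Finset.mem_filter, Finset.mem_product, Finset.mem_Icc] at *
      omega
    · intro p hp
      simp only [Finset.mem_filter, Finset.mem_product, Finset.mem_Icc] at hp
      have : k - p.1 = p.2 := by omega
      simp [this]
    · intro i _; rfl
    · intro p hp
      simp only [Finset.mem_filter, Finset.mem_product, Finset.mem_Icc] at hp
      have : k - p.1 = p.2 := by omega
      rw [this]
  rw [hB1]
  have hper : ∀ i ∈ Finset.Icc (max 1 (k-g)) (min g (k-1)),
      LamEntry g i (k-i)
      = lamPoly g k * (C (((2*g+1).choose g : ℚ) / (((2*g+1).choose (2*g+1-k) : ℕ) : ℚ))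
          * C (∑ a ∈ Finset.range (k+1), ((min i (k-i) - a : ℕ):ℚ) * (wAux g k a : ℚ))) := by
    intro i hi
    rw [Finset.mem_Icc] at hi
    unfold LamEntry LamEntryLE
    have hmM : min i (k-i) + max i (k-i) = k := by
      rw [min_add_max]; omega
    rw [inner_eq g k (min i (k-i)) (max i (k-i)) (by omega) (by omega) (by omega) hmM
      (min_le_max), hmM, show 2*g+1 - min i (k-i) - max i (k-i) = 2*g+1-k by omega,
      mul_assoc]
  rw [Finset.sum_congr rfl hper, ← Finset.mul_sum, ← Finset.mul_sum, ← map_sum,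
    scalar_core g k hg hk2 hk, ← C_mul]
  congr 2
  rw [Nat.choose_symm (show k ≤ 2*g+1 by omega)]
  have hBne : (((2*g+1).choose k : ℕ) : ℚ) ≠ 0 := by
    have := Nat.choose_pos (show k ≤ 2*g+1 by omega)
    positivity
  field_simp
  ring
end
end

section
/- Let x₂, x₃, x₄ : ℝ → ℂ be differentiable functions satisfying the polynomial dynamical system x₂′ = x₃, x₃′ = x₄, x₄′ = 12 x₂ x₃. Then the two functions λ₄ = (1/2)x₄ − 3x₂² and λ₆ = (1/4)x₃² + 2x₂³ − (1/2)x₄x₂ are constant along every solution (their derivatives vanish identically). -/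
/- STATEMENT 8: along solutions of the genus-1 stationary KdV system
   x₂′ = x₃, x₃′ = x₄, x₄′ = 12x₂x₃, the functions λ₄ = (1/2)x₄ − 3x₂² and
   λ₆ = (1/4)x₃² + 2x₂³ − (1/2)x₄x₂ are constant (their derivatives vanish). -/

theorem genus1_KdV_integrals (x2 x3 x4 : ℝ → ℂ)
    (h2 : Differentiable ℝ x2) (h3 : Differentiable ℝ x3) (h4 : Differentiable ℝ x4)
    (e2 : ∀ t, deriv x2 t = x3 t)
    (e3 : ∀ t, deriv x3 t = x4 t)
    (e4 : ∀ t, deriv x4 t = 12 * x2 t * x3 t) :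
    (∀ t, deriv (fun t => (1 / 2) * x4 t - 3 * (x2 t) ^ 2) t = 0) ∧
    (∀ t, deriv (fun t => (1 / 4) * (x3 t) ^ 2 + 2 * (x2 t) ^ 3 - (1 / 2) * x4 t * x2 t) t
      = 0) := by
  have H2 : ∀ t, HasDerivAt x2 (x3 t) t := fun t => e2 t ▸ (h2 t).hasDerivAt
  have H3 : ∀ t, HasDerivAt x3 (x4 t) t := fun t => e3 t ▸ (h3 t).hasDerivAt
  have H4 : ∀ t, HasDerivAt x4 (12 * x2 t * x3 t) t := fun t => e4 t ▸ (h4 t).hasDerivAt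
  have sq2 : ∀ t, HasDerivAt (fun t => (x2 t) ^ 2) (x3 t * x2 t + x2 t * x3 t) t := by
    intro t
    simpa [pow_two, Pi.mul_def] using (H2 t).mul (H2 t)
  have sq3 : ∀ t, HasDerivAt (fun t => (x3 t) ^ 2) (x4 t * x3 t + x3 t * x4 t) t := by
    intro t
    simpa [pow_two, Pi.mul_def] using (H3 t).mul (H3 t)
  have cb2 : ∀ t, HasDerivAt (fun t => (x2 t) ^ 3)
      ((x3 t * x2 t + x2 t * x3 t) * x2 t + x2 t ^ 2 * x3 t) t := by
    intro t
    simpa [pow_succ, Pi.mul_def] using (sq2 t).mul (H2 t)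
  constructor <;> intro t
  · have : HasDerivAt (fun t => (1 / 2 : ℂ) * x4 t - 3 * (x2 t) ^ 2)
        ((1/2) * (12 * x2 t * x3 t) - 3 * (x3 t * x2 t + x2 t * x3 t)) t :=
      ((H4 t).const_mul _).sub ((sq2 t).const_mul _)
    rw [this.deriv]; ring
  · have : HasDerivAt (fun t => (1 / 4 : ℂ) * (x3 t) ^ 2 + 2 * (x2 t) ^ 3 - (1 / 2) * x4 t * x2 t)
        (((1/4) * (x4 t * x3 t + x3 t * x4 t)
            + 2 * ((x3 t * x2 t + x2 t * x3 t) * x2 t + x2 t ^ 2 * x3 t))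
          - ((1/2) * (12 * x2 t * x3 t) * x2 t + (1/2) * x4 t * x3 t)) t :=
      (((sq3 t).const_mul _).add ((cb2 t).const_mul _)).sub
        (((H4 t).const_mul _).mul (H2 t))
    rw [this.deriv]; ring
end

section
/- Let x₂, x₃, x₄, y₄, y₅, y₆ : ℝ → ℂ be differentiable functions satisfying the polynomial dynamical system x₂′ = x₃, x₃′ = x₄, x₄′ = 12 x₂ x₃ + 4 y₅, y₄′ = y₅, y₅′ = y₆, y₆′ = 4 x₃ y₄ + 8 x₂ y₅. Then the four functions λ₄ = −3x₂² + (1/2)x₄ − 2y₄, λ₆ = 2x₂³ + (1/4)x₃² − (1/2)x₂x₄ − 2x₂y₄ + (1/2)y₆, λ₈ = (4x₂² + y₄)y₄ − (1/2)(x₄y₄ − x₃y₅ + x₂y₆), and λ₁₀ = 2x₂y₄² + (1/4)y₅² − (1/2)y₄y₆ are constant along every solution (their derivatives vanish identically). -/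
/- STATEMENT 9: along solutions of the genus-2 stationary KdV system
   x₂′ = x₃, x₃′ = x₄, x₄′ = 12x₂x₃ + 4y₅, y₄′ = y₅, y₅′ = y₆, y₆′ = 4x₃y₄ + 8x₂y₅,
   the four functions λ₄, λ₆, λ₈, λ₁₀ are constant (their derivatives vanish). -/

theorem genus2_KdV_integrals (x2 x3 x4 y4 y5 y6 : ℝ → ℂ)
    (hx2 : Differentiable ℝ x2) (hx3 : Differentiable ℝ x3) (hx4 : Differentiable ℝ x4)
    (hy4 : Differentiable ℝ y4) (hy5 : Differentiable ℝ y5) (hy6 : Differentiable ℝ y6)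
    (ex2 : ∀ t, deriv x2 t = x3 t)
    (ex3 : ∀ t, deriv x3 t = x4 t)
    (ex4 : ∀ t, deriv x4 t = 12 * x2 t * x3 t + 4 * y5 t)
    (ey4 : ∀ t, deriv y4 t = y5 t)
    (ey5 : ∀ t, deriv y5 t = y6 t)
    (ey6 : ∀ t, deriv y6 t = 4 * x3 t * y4 t + 8 * x2 t * y5 t) :
    (∀ t, deriv (fun t => -3 * (x2 t) ^ 2 + (1 / 2) * x4 t - 2 * y4 t) t = 0) ∧
    (∀ t, deriv (fun t => 2 * (x2 t) ^ 3 + (1 / 4) * (x3 t) ^ 2 - (1 / 2) * x2 t * x4 t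
      - 2 * x2 t * y4 t + (1 / 2) * y6 t) t = 0) ∧
    (∀ t, deriv (fun t => (4 * (x2 t) ^ 2 + y4 t) * y4 t
      - (1 / 2) * (x4 t * y4 t - x3 t * y5 t + x2 t * y6 t)) t = 0) ∧
    (∀ t, deriv (fun t => 2 * x2 t * (y4 t) ^ 2 + (1 / 4) * (y5 t) ^ 2
      - (1 / 2) * y4 t * y6 t) t = 0) := by
  have H : ∀ t,
      HasDerivAt x2 (x3 t) t ∧ HasDerivAt x3 (x4 t) t ∧
      HasDerivAt x4 (12 * x2 t * x3 t + 4 * y5 t) t ∧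
      HasDerivAt y4 (y5 t) t ∧ HasDerivAt y5 (y6 t) t ∧
      HasDerivAt y6 (4 * x3 t * y4 t + 8 * x2 t * y5 t) t := by
    intro t
    refine ⟨?_, ?_, ?_, ?_, ?_, ?_⟩
    · have := (hx2 t).hasDerivAt; rwa [ex2 t] at this
    · have := (hx3 t).hasDerivAt; rwa [ex3 t] at this
    · have := (hx4 t).hasDerivAt; rwa [ex4 t] at this
    · have := (hy4 t).hasDerivAt; rwa [ey4 t] at this
    · have := (hy5 t).hasDerivAt; rwa [ey5 t] at this
    · have := (hy6 t).hasDerivAt; rwa [ey6 t] at this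
  refine ⟨fun t => ?_, fun t => ?_, fun t => ?_, fun t => ?_⟩ <;>
    obtain ⟨h2, h3, h4, hy4', hy5', hy6'⟩ := H t
  · have h : HasDerivAt (fun t => -3 * (x2 t) ^ 2 + (1 / 2) * x4 t - 2 * y4 t) 0 t := by
      have h' := (((h2.mul h2).const_mul (-3 : ℂ)).add (h4.const_mul ((1:ℂ)/2))).sub
        (hy4'.const_mul (2 : ℂ))
      convert h' using 1
      · rfl
      · funext s; simp only [Pi.mul_apply, Pi.add_apply, Pi.sub_apply, Pi.pow_apply]; ring
      · ring
    exact h.deriv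
  · have h : HasDerivAt (fun t => 2 * (x2 t) ^ 3 + (1 / 4) * (x3 t) ^ 2 - (1 / 2) * x2 t * x4 t
        - 2 * x2 t * y4 t + (1 / 2) * y6 t) 0 t := by
      have h' := ((((((h2.mul h2).mul h2).const_mul (2 : ℂ)).add ((h3.mul h3).const_mul ((1:ℂ)/4))).sub
        ((h2.const_mul ((1:ℂ)/2)).mul h4)).sub ((h2.const_mul (2:ℂ)).mul hy4')).add
        (hy6'.const_mul ((1:ℂ)/2))
      convert h' using 1
      · rfl
      · funext s; simp only [Pi.mul_apply, Pi.add_apply, Pi.sub_apply, Pi.pow_apply]; ring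
      · simp only [Pi.mul_apply, Pi.add_apply, Pi.sub_apply, Pi.pow_apply]; ring
    exact h.deriv
  · have h : HasDerivAt (fun t => (4 * (x2 t) ^ 2 + y4 t) * y4 t
        - (1 / 2) * (x4 t * y4 t - x3 t * y5 t + x2 t * y6 t)) 0 t := by
      have h' := ((((h2.mul h2).const_mul (4 : ℂ)).add hy4').mul hy4').sub
        ((((h4.mul hy4').sub (h3.mul hy5')).add (h2.mul hy6')).const_mul ((1:ℂ)/2))
      convert h' using 1
      · rfl
      · funext s; simp only [Pi.mul_apply, Pi.add_apply, Pi.sub_apply, Pi.pow_apply]; ring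
      · simp only [Pi.mul_apply, Pi.add_apply, Pi.sub_apply, Pi.pow_apply]; ring
    exact h.deriv
  · have h : HasDerivAt (fun t => 2 * x2 t * (y4 t) ^ 2 + (1 / 4) * (y5 t) ^ 2
        - (1 / 2) * y4 t * y6 t) 0 t := by
      have h' := (((h2.const_mul (2:ℂ)).mul (hy4'.mul hy4')).add
        ((hy5'.mul hy5').const_mul ((1:ℂ)/4))).sub ((hy4'.const_mul ((1:ℂ)/2)).mul hy6')
      convert h' using 1
      · rfl
      · funext s; simp only [Pi.mul_apply, Pi.add_apply, Pi.sub_apply, Pi.pow_apply]; ring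
      · simp only [Pi.mul_apply, Pi.add_apply, Pi.sub_apply, Pi.pow_apply]; ring
    exact h.deriv
end
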